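/- Let Z ⊂ ℙ₂ be a finite set of points not contained in any line. Then Z is contained in some Kronecker–Weierstrass variety of ℙ₂ whose distinguished point (in the case of type (0;2)) does not lie in Z, if and only if there exists a nonzero homogeneous quadratic form in k[z₀,z₁,z₂] vanishing on every point of Z. -/

import Mathlib

noncomputable section

open scoped BigOperators

/-- The set of points of `ℙ_n = ℙ(k^{n+1})` lying in the projectivization of the
linear subspace `W ⊆ k^{n+1}`. -/
def projSet (k : Type*) [Field k] {n : ℕ} (W : Submodule k (Fin (n + 1) → k)) :
    Set (Projectivization k (Fin (n + 1) → k)) :=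
  {x | x.rep ∈ W}

/-- `C ⊆ ℙ_n` is a rational normal curve of degree `d`, spanning the `d`-dimensional
linear subspace of `ℙ_n` given by the `(d+1)`-dimensional subspace `L ⊆ k^{n+1}`:
namely, `C` is the image of the degree-`d` Veronese map `ℙ¹ → ℙ_n` composed with an
injective linear map `A : k^{d+1} → k^{n+1}`, and `L = im A`. -/
def IsRNC (k : Type*) [Field k] (n d : ℕ)
    (C : Set (Projectivization k (Fin (n + 1) → k)))
    (L : Submodule k (Fin (n + 1) → k)) : Prop :=
  ∃ A : (Fin (d + 1) → k) →ₗ[k] (Fin (n + 1) → k), Function.Injective A ∧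
    L = LinearMap.range A ∧
    C = {x | ∃ s t c : k, c ≠ 0 ∧
          c • x.rep = A fun i => s ^ (d - (i : ℕ)) * t ^ (i : ℕ)}

/-- `Y ⊆ ℙ_n` is a Kronecker–Weierstrass variety of type `(d;s)` with `d ≥ 1` and
curve part `C`: there are integers `n₁, …, n_s` with `1 ≤ nᵢ ≤ n - 1` and
`d + n₁ + ⋯ + n_s = n`, a rational normal curve `C` of degree `d` spanning a
`d`-dimensional linear subspace `L`, and linear subspaces `Lᵢ` of dimension `nᵢ`,
such that each `L ∩ Lᵢ` is a single point lying on `C`, the `Lᵢ` are pairwise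
disjoint, and `Y = C ∪ L₁ ∪ ⋯ ∪ L_s`. -/
def IsKWpos (k : Type*) [Field k] (n d s : ℕ)
    (Y C : Set (Projectivization k (Fin (n + 1) → k))) : Prop :=
  1 ≤ d ∧
  ∃ (nn : Fin s → ℕ) (L : Submodule k (Fin (n + 1) → k))
    (W : Fin s → Submodule k (Fin (n + 1) → k)),
    (∀ i, 1 ≤ nn i ∧ nn i ≤ n - 1) ∧ (d + ∑ i, nn i = n) ∧
    IsRNC k n d C L ∧
    (∀ i, Module.finrank k (W i) = nn i + 1) ∧
    (∀ i, ∃ p ∈ C, projSet k L ∩ projSet k (W i) = {p}) ∧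
    (∀ i j, i ≠ j → projSet k (W i) ∩ projSet k (W j) = ∅) ∧
    Y = C ∪ ⋃ i, projSet k (W i)

/-- `Y ⊆ ℙ_n` is a Kronecker–Weierstrass variety of type `(0;s)` with distinguished
point `y`: there are integers `n₁, …, n_s` with `1 ≤ nᵢ ≤ n - 1` and
`n₁ + ⋯ + n_s = n`, and linear subspaces `Lᵢ` of dimension `nᵢ`, all passing
through `y`, any two of which meet exactly at `y`, with `Y = L₁ ∪ ⋯ ∪ L_s`. -/
def IsKW0 (k : Type*) [Field k] (n s : ℕ)
    (Y : Set (Projectivization k (Fin (n + 1) → k)))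
    (y : Projectivization k (Fin (n + 1) → k)) : Prop :=
  ∃ (nn : Fin s → ℕ) (W : Fin s → Submodule k (Fin (n + 1) → k)),
    (∀ i, 1 ≤ nn i ∧ nn i ≤ n - 1) ∧ (∑ i, nn i = n) ∧
    (∀ i, Module.finrank k (W i) = nn i + 1) ∧
    (∀ i, y ∈ projSet k (W i)) ∧
    (∀ i j, i ≠ j → projSet k (W i) ∩ projSet k (W j) = {y}) ∧
    Y = ⋃ i, projSet k (W i)

/-! ### Auxiliary material -/

namespace Statement8Aux

open MvPolynomial

variable {k : Type*} [Field k]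

/-- the linear polynomial associated to a linear functional on `k³` -/
def linPoly (φ : Module.Dual k (Fin 3 → k)) : MvPolynomial (Fin 3) k :=
  ∑ i, MvPolynomial.C (φ (Pi.single i 1)) * MvPolynomial.X i

lemma linPoly_eval (φ : Module.Dual k (Fin 3 → k)) (v : Fin 3 → k) :
    eval v (linPoly φ) = φ v := by
  have hsingle : ∀ i, (Pi.single i 1 : Fin 3 → k) = fun j => if i = j then 1 else 0 := by
    intro i; funext j; simp [Pi.single_apply, eq_comm]
  simp only [linPoly, map_sum, eval_mul, eval_C, eval_X]
  rw [LinearMap.pi_apply_eq_sum_univ φ v]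
  exact Finset.sum_congr rfl fun i _ => by rw [hsingle]; rw [smul_eq_mul, mul_comm]

lemma linPoly_hom (φ : Module.Dual k (Fin 3 → k)) : (linPoly φ).IsHomogeneous 1 := by
  apply MvPolynomial.IsHomogeneous.sum
  intro i _
  simpa using (isHomogeneous_C _ (φ (Pi.single i 1))).mul (isHomogeneous_X _ i)

lemma linPoly_ne_zero {φ : Module.Dual k (Fin 3 → k)} (hφ : φ ≠ 0) : linPoly φ ≠ 0 := by
  intro h
  apply hφ
  apply LinearMap.ext
  intro v
  rw [← linPoly_eval φ v, h]
  simp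

/-- The quadratic form with given coefficients. -/
def Qf (a b c d e f : k) (v : Fin 3 → k) : k :=
  a * (v 0 * v 0) + b * (v 0 * v 1) + c * (v 0 * v 2)
    + d * (v 1 * v 1) + e * (v 1 * v 2) + f * (v 2 * v 2)

lemma homog_deg_lemma (q : MvPolynomial (Fin 3) k) (hq : q.IsHomogeneous 2)
    (d : Fin 3 →₀ ℕ) (hd : d ∈ q.support) : d 0 + d 1 + d 2 = 2 := by
  have := hq (MvPolynomial.mem_support_iff.mp hd)
  simpa [Finsupp.weight_apply, Finsupp.sum_fintype, Fin.sum_univ_three] using this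

lemma finsupp_eq_iff (d : Fin 3 →₀ ℕ) (m : Fin 3 →₀ ℕ) :
    d = m ↔ (d 0 = m 0 ∧ d 1 = m 1 ∧ d 2 = m 2) := by
  constructor
  · rintro rfl; exact ⟨rfl, rfl, rfl⟩
  · rintro ⟨h0, h1, h2⟩
    ext i
    fin_cases i <;> assumption

lemma expand2 (q : MvPolynomial (Fin 3) k) (hq : q.IsHomogeneous 2) (v : Fin 3 → k) :
    eval v q = Qf (coeff (Finsupp.single 0 2) q)
      (coeff (Finsupp.single 0 1 + Finsupp.single 1 1) q)
      (coeff (Finsupp.single 0 1 + Finsupp.single 2 1) q)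
      (coeff (Finsupp.single 1 2) q)
      (coeff (Finsupp.single 1 1 + Finsupp.single 2 1) q)
      (coeff (Finsupp.single 2 2) q) v := by
  classical
  have key : ∀ d ∈ q.support,
      coeff d q * (v 0 ^ d 0 * (v 1 ^ d 1 * v 2 ^ d 2)) =
      (if d = (Finsupp.single 0 2 : Fin 3 →₀ ℕ) then coeff d q else 0) * (v 0 * v 0)
      + (if d = ((Finsupp.single 0 1 + Finsupp.single 1 1) : Fin 3 →₀ ℕ) then coeff d q else 0) * (v 0 * v 1)
      + (if d = ((Finsupp.single 0 1 + Finsupp.single 2 1) : Fin 3 →₀ ℕ) then coeff d q else 0) * (v 0 * v 2)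
      + (if d = (Finsupp.single 1 2 : Fin 3 →₀ ℕ) then coeff d q else 0) * (v 1 * v 1)
      + (if d = ((Finsupp.single 1 1 + Finsupp.single 2 1) : Fin 3 →₀ ℕ) then coeff d q else 0) * (v 1 * v 2)
      + (if d = (Finsupp.single 2 2 : Fin 3 →₀ ℕ) then coeff d q else 0) * (v 2 * v 2) := by
    intro d hd
    have hsum := homog_deg_lemma q hq d hd
    have h0 : d 0 = 0 ∨ d 0 = 1 ∨ d 0 = 2 := by omega
    have h1 : d 1 = 0 ∨ d 1 = 1 ∨ d 1 = 2 := by omega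
    have h2 : d 2 = 0 ∨ d 2 = 1 ∨ d 2 = 2 := by omega
    rcases h0 with h0 | h0 | h0 <;> rcases h1 with h1 | h1 | h1 <;>
      rcases h2 with h2 | h2 | h2 <;>
    simp_all [finsupp_eq_iff, Finsupp.single_apply, Finsupp.add_apply] <;>
    ring
  calc eval v q = ∑ d ∈ q.support, coeff d q * (v 0 ^ d 0 * (v 1 ^ d 1 * v 2 ^ d 2)) := by
        rw [eval_eq']
        exact Finset.sum_congr rfl fun d _ => by rw [Fin.prod_univ_three]; ring
    _ = ∑ d ∈ q.support,
        ((if d = (Finsupp.single 0 2 : Fin 3 →₀ ℕ) then coeff d q else 0) * (v 0 * v 0)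
        + (if d = ((Finsupp.single 0 1 + Finsupp.single 1 1) : Fin 3 →₀ ℕ) then coeff d q else 0) * (v 0 * v 1)
        + (if d = ((Finsupp.single 0 1 + Finsupp.single 2 1) : Fin 3 →₀ ℕ) then coeff d q else 0) * (v 0 * v 2)
        + (if d = (Finsupp.single 1 2 : Fin 3 →₀ ℕ) then coeff d q else 0) * (v 1 * v 1)
        + (if d = ((Finsupp.single 1 1 + Finsupp.single 2 1) : Fin 3 →₀ ℕ) then coeff d q else 0) * (v 1 * v 2)
        + (if d = (Finsupp.single 2 2 : Fin 3 →₀ ℕ) then coeff d q else 0) * (v 2 * v 2)) :=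
      Finset.sum_congr rfl key
    _ = _ := by
        simp only [Finset.sum_add_distrib, ← Finset.sum_mul]
        have : ∀ m : Fin 3 →₀ ℕ, (∑ d ∈ q.support, if d = m then coeff d q else 0) = coeff m q := by
          intro m
          rw [Finset.sum_ite_eq' q.support m (fun d => coeff d q)]
          split
          · rfl
          · next h => exact (MvPolynomial.notMem_support_iff.mp h).symm
        rw [this, this, this, this, this, this]
        rfl

def dual3 (α β γ : k) : Module.Dual k (Fin 3 → k) :=
  α • LinearMap.proj 0 + β • LinearMap.proj 1 + γ • LinearMap.proj 2

@[simp] lemma dual3_apply (α β γ : k) (v : Fin 3 → k) :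
    dual3 α β γ v = α * v 0 + β * v 1 + γ * v 2 := by
  simp [dual3, smul_eq_mul]

def mkL (f : (Fin 3 → k) → (Fin 3 → k))
    (hadd : ∀ u v, f (u + v) = f u + f v) (hsmul : ∀ (c : k) v, f (c • v) = c • f v) :
    (Fin 3 → k) →ₗ[k] (Fin 3 → k) :=
  { toFun := f, map_add' := hadd, map_smul' := hsmul }

@[simp] lemma mkL_apply (f : (Fin 3 → k) → (Fin 3 → k)) (hadd : ∀ u v, f (u + v) = f u + f v)
    (hsmul : ∀ (c : k) v, f (c • v) = c • f v) (v : Fin 3 → k) :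
    mkL f hadd hsmul v = f v := rfl

lemma mkL_bij (f : (Fin 3 → k) → (Fin 3 → k)) (hadd : ∀ u v, f (u + v) = f u + f v)
    (hsmul : ∀ (c : k) v, f (c • v) = c • f v)
    (hker : ∀ v, f v = 0 → v = 0) : Function.Bijective (mkL f hadd hsmul) := by
  have hinj : Function.Injective (mkL f hadd hsmul) := by
    rw [← LinearMap.ker_eq_bot]
    exact (Submodule.eq_bot_iff _).2 fun v hv => hker v (LinearMap.mem_ker.mp hv)
  exact ⟨hinj, (LinearMap.injective_iff_surjective).mp hinj⟩

def mkE' (f : (Fin 3 → k) → (Fin 3 → k)) (hadd : ∀ u v, f (u + v) = f u + f v)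
    (hsmul : ∀ (c : k) v, f (c • v) = c • f v)
    (hker : ∀ v, f v = 0 → v = 0) : (Fin 3 → k) ≃ₗ[k] (Fin 3 → k) :=
  LinearEquiv.ofBijective (mkL f hadd hsmul) (mkL_bij f hadd hsmul hker)

@[simp] lemma mkE'_apply (f : (Fin 3 → k) → (Fin 3 → k)) (hadd : ∀ u v, f (u + v) = f u + f v)
    (hsmul : ∀ (c : k) v, f (c • v) = c • f v) (hker : ∀ v, f v = 0 → v = 0) (v : Fin 3 → k) :
    mkE' f hadd hsmul hker v = f v := rfl

/-- diagonal scaling -/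
def diagE (r0 r1 r2 : k) (h0 : r0 ≠ 0) (h1 : r1 ≠ 0) (h2 : r2 ≠ 0) :
    (Fin 3 → k) ≃ₗ[k] (Fin 3 → k) :=
  mkE' (fun v => ![r0 * v 0, r1 * v 1, r2 * v 2])
    (by intros u v; funext i; fin_cases i <;> simp [Pi.add_apply] <;> ring)
    (by intros r v; funext i; fin_cases i <;> simp [Pi.smul_apply, smul_eq_mul] <;> ring)
    (by
      intro v hv
      have e0 := congrFun hv 0
      have e1 := congrFun hv 1
      have e2 := congrFun hv 2
      simp [h0, h1, h2] at e0 e1 e2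
      funext i; fin_cases i <;> assumption)

@[simp] lemma diagE_apply (r0 r1 r2 : k) (h0 : r0 ≠ 0) (h1 : r1 ≠ 0) (h2 : r2 ≠ 0)
    (v : Fin 3 → k) : diagE r0 r1 r2 h0 h1 h2 v = ![r0 * v 0, r1 * v 1, r2 * v 2] := rfl

/-- The classification outcome for a quadratic form. -/
def GoodQ (Q : (Fin 3 → k) → k) : Prop :=
  (∃ φ ψ : Module.Dual k (Fin 3 → k), ∀ v, Q v = φ v * ψ v) ∨
  (∃ A : (Fin 3 → k) ≃ₗ[k] (Fin 3 → k), ∀ v, Q (A v) = v 0 * v 2 - v 1 * v 1)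

lemma GoodQ.comp {Q Q' : (Fin 3 → k) → k} (T : (Fin 3 → k) ≃ₗ[k] (Fin 3 → k))
    (h : ∀ v, Q (T v) = Q' v) (H : GoodQ Q') : GoodQ Q := by
  rcases H with ⟨φ, ψ, hφψ⟩ | ⟨A, hA⟩
  · left
    refine ⟨φ.comp T.symm.toLinearMap, ψ.comp T.symm.toLinearMap, fun v => ?_⟩
    have := h (T.symm v)
    rw [T.apply_symm_apply] at this
    rw [this, hφψ]; rfl
  · right
    exact ⟨A.trans T, fun v => by
      have : Q (T (A v)) = v 0 * v 2 - v 1 * v 1 := (h (A v)).trans (hA v)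
      simpa using this⟩

lemma quad_root [IsAlgClosed k] (a c f : k) (ha : a ≠ 0) : ∃ x : k, a * x ^ 2 + c * x + f = 0 := by
  obtain ⟨x, hx⟩ := IsAlgClosed.exists_root
    (Polynomial.C a * Polynomial.X ^ 2 + Polynomial.C c * Polynomial.X + Polynomial.C f)
    (by rw [Polynomial.degree_quadratic ha]; norm_num)
  exact ⟨x, by simpa [Polynomial.IsRoot] using hx⟩

/-- classification when `a = 0` and `c ≠ 0`. -/
lemma classify0c [IsAlgClosed k] (b c d e f : k) (hc : c ≠ 0) : GoodQ (Qf 0 b c d e f) := by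
  by_cases hγ : d * c ^ 2 - e * b * c + f * b ^ 2 = 0
  · left
    refine ⟨dual3 0 b c, dual3 1 (e / c - f * b / c ^ 2) (f / c), fun v => ?_⟩
    simp only [Qf, dual3_apply]
    field_simp
    linear_combination (v 1 * v 1) * hγ
  · right
    obtain ⟨μ, hμ⟩ := quad_root (d * c ^ 2 - e * b * c + f * b ^ 2) 0 (c ^ 2) hγ
    have hμ' : (d * c ^ 2 - e * b * c + f * b ^ 2) * μ ^ 2 = -c ^ 2 := by
      linear_combination hμ
    have hμ0 : μ ≠ 0 := by
      intro h
      apply hc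
      rw [h] at hμ'
      have h2 : c ^ 2 = 0 := by linear_combination hμ'
      exact pow_eq_zero_iff (n := 2) (by norm_num) |>.mp h2
    obtain ⟨ν, hν⟩ := quad_root (c ^ 4) 0 (-1) (pow_ne_zero 4 hc)
    have hν' : c ^ 4 * ν ^ 2 = 1 := by linear_combination hν
    have hν0 : ν ≠ 0 := by
      intro h; rw [h] at hν; simp at hν
    set A : (Fin 3 → k) ≃ₗ[k] (Fin 3 → k) := mkE'
      (fun v => ![c ^ 2 * v 0 - (e * c - 2 * f * b) * μ * v 1 - f * v 2, μ * c ^ 2 * v 1, c * v 2 - b * μ * c * v 1])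
      (by intros u v; funext i; fin_cases i <;> simp [Pi.add_apply] <;> ring)
      (by intros r v; funext i; fin_cases i <;> simp [Pi.smul_apply, smul_eq_mul] <;> ring)
      (by
        intro v hv
        have h1 : μ * c ^ 2 * v 1 = 0 := by simpa using congrFun hv 1
        have hv1 : v 1 = 0 := by
          rcases mul_eq_zero.mp h1 with h | h
          · exact absurd h (mul_ne_zero hμ0 (pow_ne_zero 2 hc))
          · exact h
        have h2 : c * v 2 - b * μ * c * v 1 = 0 := by simpa using congrFun hv 2
        have hv2 : v 2 = 0 := by
          rw [hv1] at h2
          simpa [hc] using h2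
        have h0 : c ^ 2 * v 0 - (e * c - 2 * f * b) * μ * v 1 - f * v 2 = 0 := by
          simpa using congrFun hv 0
        have hv0 : v 0 = 0 := by
          rw [hv1, hv2] at h0
          simpa [pow_ne_zero 2 hc] using h0
        funext i; fin_cases i <;> assumption) with hA
    have key : ∀ v : Fin 3 → k, Qf 0 b c d e f (A v) = c ^ 4 * (v 0 * v 2 - v 1 * v 1) := by
      intro v
      simp only [hA, mkE'_apply, Qf, Matrix.cons_val_zero, Matrix.cons_val_one,
        Matrix.head_cons, Matrix.cons_val_two, Matrix.tail_cons]
      linear_combination (c ^ 2 * v 1 * v 1) * hμ'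
    refine ⟨(diagE ν ν ν hν0 hν0 hν0).trans A, fun v => ?_⟩
    rw [LinearEquiv.trans_apply, key]
    simp only [diagE_apply, Matrix.cons_val_zero, Matrix.cons_val_one, Matrix.head_cons,
      Matrix.cons_val_two, Matrix.tail_cons]
    linear_combination (v 0 * v 2 - v 1 * v 1) * hν'

lemma classify0 [IsAlgClosed k] (b c d e f : k) : GoodQ (Qf 0 b c d e f) := by
  by_cases hc : c = 0
  · subst hc
    by_cases hb : b = 0
    · subst hb
      by_cases hd : d = 0
      · subst hd
        left
        exact ⟨dual3 0 0 1, dual3 0 e f, fun v => by simp [Qf]; ring⟩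
      · obtain ⟨r, hr⟩ := quad_root d e f hd
        left
        refine ⟨dual3 0 1 (-r), dual3 0 d (e + d * r), fun v => ?_⟩
        simp only [Qf, dual3_apply]
        linear_combination (v 2 * v 2) * hr
    · refine GoodQ.comp (Q' := Qf 0 0 b f e d)
        (mkE' (fun v => ![v 0, v 2, v 1])
          (by intros u v; funext i; fin_cases i <;> simp [Pi.add_apply])
          (by intros r v; funext i; fin_cases i <;> simp [Pi.smul_apply, smul_eq_mul])
          (by
            intro v hv
            have h0 := congrFun hv 0
            have h1 := congrFun hv 1
            have h2 := congrFun hv 2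
            simp at h0 h1 h2
            funext i; fin_cases i <;> assumption))
        (fun v => by simp [Qf]; ring)
        (classify0c 0 b f e d hb)
  · exact classify0c b c d e f hc

lemma classify [IsAlgClosed k] (a b c d e f : k) : GoodQ (Qf a b c d e f) := by
  by_cases ha : a = 0
  · subst ha; exact classify0 b c d e f
  · obtain ⟨x₀, hx₀⟩ := quad_root a c f ha
    refine GoodQ.comp (Q' := Qf 0 (b * x₀ + e) (2 * a * x₀ + c) d b a)
      (mkE' (fun v => ![x₀ * v 0 + v 2, v 1, v 0])
        (by intros u v; funext i; fin_cases i <;> simp [Pi.add_apply] <;> ring)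
        (by intros r v; funext i; fin_cases i <;> simp [Pi.smul_apply, smul_eq_mul] <;> ring)
        (by
          intro v hv
          have h0 := congrFun hv 0
          have h1 := congrFun hv 1
          have h2 := congrFun hv 2
          simp at h0 h1 h2
          rw [h2] at h0
          simp at h0
          funext i; fin_cases i <;> assumption))
      (fun v => by
        simp only [mkE'_apply, Qf, Matrix.cons_val_zero, Matrix.cons_val_one,
          Matrix.head_cons, Matrix.cons_val_two, Matrix.tail_cons]
        linear_combination (v 0 * v 0) * hx₀)
      (classify0 (b * x₀ + e) (2 * a * x₀ + c) d b a)

lemma Qf_smul (a b c d e f r : k) (v : Fin 3 → k) :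
    Qf a b c d e f (r • v) = r ^ 2 * Qf a b c d e f v := by
  simp only [Qf, Pi.smul_apply, smul_eq_mul]; ring

lemma finrank_fin3 : Module.finrank k (Fin 3 → k) = 3 := Module.finrank_fin_fun k

/-- a nonzero functional vanishing on a plane -/
lemma plane_dual (W : Submodule k (Fin 3 → k)) (hW : Module.finrank k W = 2) :
    ∃ φ : Module.Dual k (Fin 3 → k), φ ≠ 0 ∧ ∀ v ∈ W, φ v = 0 := by
  have hlt : W < ⊤ := by
    rcases lt_or_eq_of_le (le_top (a := W)) with h | h
    · exact h
    · exfalso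
      rw [h] at hW
      rw [finrank_top k (Fin 3 → k), finrank_fin3] at hW
      omega
  obtain ⟨φ, hφ0, hφ⟩ := Submodule.exists_dual_map_eq_bot_of_lt_top hlt inferInstance
  refine ⟨φ, hφ0, fun v hv => ?_⟩
  have : φ v ∈ W.map φ := Submodule.mem_map_of_mem hv
  rw [hφ] at this
  simpa using this

/-- kernel of a nonzero functional has rank 2 -/
lemma dual_ker_rank (φ : Module.Dual k (Fin 3 → k)) (hφ : φ ≠ 0) :
    Module.finrank k (LinearMap.ker φ) = 2 := by
  have hr : Module.finrank k (LinearMap.range φ) = 1 := by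
    have h1 : LinearMap.range φ ≠ ⊥ := by
      rw [Ne, LinearMap.range_eq_bot]; exact hφ
    have hle : Module.finrank k (LinearMap.range φ) ≤ 1 := by
      simpa using Submodule.finrank_le (LinearMap.range φ)
    have hge : Module.finrank k (LinearMap.range φ) ≠ 0 := by
      rw [Ne, Submodule.finrank_eq_zero]; exact h1
    omega
  have := LinearMap.finrank_range_add_finrank_ker φ
  rw [hr, finrank_fin3] at this
  omega

/-- two distinct planes meet in a line -/
lemma planes_meet (L W : Submodule k (Fin 3 → k)) (hL : Module.finrank k L = 2)
    (hW : Module.finrank k W = 2) (hne : L ≠ W) :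
    Module.finrank k ↥(L ⊓ W) = 1 := by
  have hWL : ¬W ≤ L := fun hle => hne ((Submodule.eq_of_le_of_finrank_eq hle (by rw [hW, hL])).symm)
  have hlt : L < L ⊔ W := lt_of_le_of_ne le_sup_left (by
    intro h
    exact hWL (h ▸ le_sup_right))
  have h3 : Module.finrank k ↥(L ⊔ W) = 3 := by
    have hup : Module.finrank k ↥(L ⊔ W) ≤ 3 := by
      simpa [finrank_fin3] using Submodule.finrank_le (L ⊔ W)
    have hlow : 2 < Module.finrank k ↥(L ⊔ W) := hL ▸ Submodule.finrank_lt_finrank_of_lt hlt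
    omega
  have := Submodule.finrank_sup_add_finrank_inf_eq L W
  rw [h3, hL, hW] at this
  omega

/-- the projectivization of a line is a single point -/
lemma projSet_singleton (U : Submodule k (Fin 3 → k)) (hU : Module.finrank k U = 1) :
    ∃ p : Projectivization k (Fin 3 → k), p.rep ∈ U ∧
      {x : Projectivization k (Fin 3 → k) | x.rep ∈ U} = {p} := by
  have hUb : U ≠ ⊥ := by
    intro h; rw [h, finrank_bot] at hU; omega
  obtain ⟨u, hu, hune⟩ := Submodule.exists_mem_ne_zero_of_ne_bot hUb
  have hspan : Submodule.span k {u} = U := by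
    apply Submodule.eq_of_le_of_finrank_eq
    · rwa [Submodule.span_singleton_le_iff_mem]
    · rw [hU, finrank_span_singleton hune]
  refine ⟨Projectivization.mk k u hune, ?_, ?_⟩
  · obtain ⟨a, ha⟩ := Projectivization.exists_smul_eq_mk_rep k u hune
    rw [← ha]
    exact U.smul_mem _ hu
  · ext x
    simp only [Set.mem_setOf_eq, Set.mem_singleton_iff]
    constructor
    · intro hx
      rw [← hspan, Submodule.mem_span_singleton] at hx
      obtain ⟨c, hc⟩ := hx
      have hc0 : c ≠ 0 := by
        intro h; rw [h, zero_smul] at hc; exact x.rep_nonzero hc.symm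
      rw [← Projectivization.mk_rep x]
      exact (Projectivization.mk_eq_mk_iff' k _ _ x.rep_nonzero hune).2 ⟨c, hc⟩
    · rintro rfl
      obtain ⟨a, ha⟩ := Projectivization.exists_smul_eq_mk_rep k u hune
      rw [← ha]
      exact U.smul_mem _ hu

/-- a quadratic vanishing on the union of two planes -/
lemma quad_of_two_planes (W₁ W₂ : Submodule k (Fin 3 → k))
    (h1 : Module.finrank k W₁ = 2) (h2 : Module.finrank k W₂ = 2) :
    ∃ q : MvPolynomial (Fin 3) k, q ≠ 0 ∧ q.IsHomogeneous 2 ∧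
      ∀ v : Fin 3 → k, (v ∈ W₁ ∨ v ∈ W₂) → eval v q = 0 := by
  obtain ⟨φ, hφ0, hφ⟩ := plane_dual W₁ h1
  obtain ⟨ψ, hψ0, hψ⟩ := plane_dual W₂ h2
  refine ⟨linPoly φ * linPoly ψ, mul_ne_zero (linPoly_ne_zero hφ0) (linPoly_ne_zero hψ0),
    ?_, fun v hv => ?_⟩
  · exact (linPoly_hom φ).mul (linPoly_hom ψ)
  · rw [eval_mul, linPoly_eval, linPoly_eval]
    rcases hv with hv | hv
    · rw [hφ v hv, zero_mul]
    · rw [hψ v hv, mul_zero]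

/-- a line (2-dim subspace) as a rational normal curve of degree 1 -/
lemma isRNC_line (L : Submodule k (Fin (2 + 1) → k)) (hL : Module.finrank k L = 2) :
    IsRNC k 2 1 (projSet k L) L := by
  have bb : Module.Basis (Fin 2) k L := Module.finBasisOfFinrankEq k L hL
  refine ⟨L.subtype.comp bb.equivFun.symm.toLinearMap, ?_, ?_, ?_⟩
  · exact L.injective_subtype.comp bb.equivFun.symm.injective
  · rw [LinearMap.range_comp, LinearEquiv.range, Submodule.map_top, Submodule.range_subtype]
  · ext x
    simp only [projSet, Set.mem_setOf_eq]
    constructor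
    · intro hx
      set w : Fin 2 → k := bb.equivFun ⟨x.rep, hx⟩ with hw
      refine ⟨w 0, w 1, 1, one_ne_zero, ?_⟩
      have hfun : (fun i : Fin 2 => (w 0) ^ (1 - (i : ℕ)) * (w 1) ^ (i : ℕ)) = w := by
        funext i; fin_cases i <;> simp
      rw [hfun, one_smul, LinearMap.comp_apply]
      show x.rep = (L.subtype) (bb.equivFun.symm w)
      rw [hw, LinearEquiv.symm_apply_apply]
      rfl
    · rintro ⟨s, t, c, hc, heq⟩
      have : x.rep = c⁻¹ • (L.subtype.comp bb.equivFun.symm.toLinearMap)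
          (fun i : Fin 2 => s ^ (1 - (i : ℕ)) * t ^ (i : ℕ)) := by
        rw [← heq, inv_smul_smul₀ hc]
      rw [this]
      apply L.smul_mem
      simp only [LinearMap.comp_apply]
      exact (bb.equivFun.symm _).2

/-- points of the conic parametrized by the Veronese -/
lemma conic_param (a b c d e f : k) (A : (Fin 3 → k) ≃ₗ[k] (Fin 3 → k))
    (hA : ∀ v, Qf a b c d e f (A v) = v 0 * v 2 - v 1 * v 1)
    (w : Fin 3 → k) (hw : w ≠ 0) (hQ : Qf a b c d e f w = 0) :
    ∃ s t c' : k, c' ≠ 0 ∧ c' • w = A ![s ^ 2, s * t, t ^ 2] := by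
  set u : Fin 3 → k := A.symm w with hu
  have hAu : A u = w := A.apply_symm_apply w
  have hkey : u 0 * u 2 - u 1 * u 1 = 0 := by rw [← hA u, hAu, hQ]
  have hu0 : u ≠ 0 := by
    intro h
    apply hw
    rw [← hAu, h, map_zero]
  by_cases h0 : u 0 = 0
  · have hu1 : u 1 = 0 := by
      have : u 1 * u 1 = 0 := by rw [h0] at hkey; linear_combination -hkey
      exact mul_self_eq_zero.mp this
    have hu2 : u 2 ≠ 0 := by
      intro h2
      apply hu0
      funext i; fin_cases i <;> assumption
    refine ⟨0, 1, (u 2)⁻¹, inv_ne_zero hu2, ?_⟩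
    rw [← hAu, ← map_smul]
    congr 1
    funext i; fin_cases i <;> simp [h0, hu1, inv_mul_cancel₀ hu2]
  · refine ⟨1, u 1 / u 0, (u 0)⁻¹, inv_ne_zero h0, ?_⟩
    rw [← hAu, ← map_smul]
    congr 1
    funext i; fin_cases i
    · simp [inv_mul_cancel₀ h0]
    · show (u 0)⁻¹ * u 1 = 1 * (u 1 / u 0)
      field_simp
    · show (u 0)⁻¹ * u 2 = (u 1 / u 0) ^ 2
      field_simp
      linear_combination hkey

end Statement8Aux

open Statement8Aux MvPolynomial

theorem statement8 (k : Type*) [Field k] [IsAlgClosed k]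
    (Z : Set (Projectivization k (Fin (2 + 1) → k))) (hfin : Z.Finite)
    (hline : ¬∃ W : Submodule k (Fin (2 + 1) → k),
        Module.finrank k W = 2 ∧ Z ⊆ projSet k W) :
    (∃ (d s : ℕ) (Y : Set (Projectivization k (Fin (2 + 1) → k))), Z ⊆ Y ∧
        ((∃ C, IsKWpos k 2 d s Y C) ∨
          (d = 0 ∧ ∃ y, IsKW0 k 2 s Y y ∧ y ∉ Z))) ↔
    (∃ q : MvPolynomial (Fin (2 + 1)) k, q ≠ 0 ∧ q.IsHomogeneous 2 ∧
      ∀ x ∈ Z, MvPolynomial.eval x.rep q = 0) := by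
  constructor
  · rintro ⟨d, s, Y, hZY, hcase⟩
    rcases hcase with ⟨C, hd1, nn, L, W, hnn, hsum, hRNC, hWr, hmeet, hdisj, hY⟩ |
      ⟨hd0, y, ⟨nn, W, hnn, hsum, hWr, hy, hmeet, hY⟩, hyZ⟩
    · -- positive degree case
      have hnn1 : ∀ i, nn i = 1 := fun i => le_antisymm (hnn i).2 (hnn i).1
      have hsum' : (∑ i, nn i) = s := by
        simp [hnn1]
      rw [hsum'] at hsum
      have hd2 : d = 1 ∨ d = 2 := by omega
      rcases hd2 with hd | hd
      · -- two lines: d = 1, s = 1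
        subst hd
        have hs1 : s = 1 := by omega
        subst hs1
        obtain ⟨A, hAinj, hL, hC⟩ := hRNC
        have hLr : Module.finrank k L = 2 := by
          rw [hL, LinearMap.finrank_range_of_inj hAinj]
          exact Module.finrank_fin_fun k
        have hW0 : Module.finrank k (W 0) = 2 := by rw [hWr 0, hnn1 0]
        obtain ⟨q, hq0, hq2, hqv⟩ := quad_of_two_planes L (W 0) hLr hW0
        refine ⟨q, hq0, hq2, fun x hx => ?_⟩
        have hxY := hZY hx
        rw [hY] at hxY
        rcases hxY with hxC | hxU
        · apply hqv
          left
          rw [hC] at hxC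
          obtain ⟨s', t', c', hc', heq⟩ := hxC
          have hrep : x.rep = c'⁻¹ • (A fun i => s' ^ (1 - (i : ℕ)) * t' ^ (i : ℕ)) := by
            rw [← heq, inv_smul_smul₀ hc']
          rw [hrep, hL]
          exact Submodule.smul_mem _ _ (LinearMap.mem_range_self A _)
        · apply hqv
          right
          obtain ⟨i, hxi⟩ := Set.mem_iUnion.mp hxU
          have hi0 : i = 0 := Subsingleton.elim i 0
          rw [hi0] at hxi
          exact hxi
      · -- smooth conic: d = 2, s = 0
        subst hd
        have hs0 : s = 0 := by omega
        subst hs0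
        obtain ⟨A, hAinj, hL, hC⟩ := hRNC
        have hAbij : Function.Bijective A :=
          ⟨hAinj, (LinearMap.injective_iff_surjective).mp hAinj⟩
        set E : (Fin 3 → k) ≃ₗ[k] (Fin 3 → k) := LinearEquiv.ofBijective A hAbij with hE
        set φ0 : Module.Dual k (Fin 3 → k) := (LinearMap.proj 0).comp E.symm.toLinearMap with hφ0
        set φ1 : Module.Dual k (Fin 3 → k) := (LinearMap.proj 1).comp E.symm.toLinearMap with hφ1
        set φ2 : Module.Dual k (Fin 3 → k) := (LinearMap.proj 2).comp E.symm.toLinearMap with hφ2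
        set q : MvPolynomial (Fin 3) k :=
          linPoly φ0 * linPoly φ2 - linPoly φ1 * linPoly φ1 with hq
        have heval : ∀ v : Fin 3 → k,
            eval v q = (E.symm v 0) * (E.symm v 2) - (E.symm v 1) * (E.symm v 1) := by
          intro v
          rw [hq]
          rw [eval_sub, eval_mul, eval_mul, linPoly_eval, linPoly_eval, linPoly_eval]
          rfl
        have hq2 : q.IsHomogeneous 2 :=
          ((linPoly_hom φ0).mul (linPoly_hom φ2)).sub ((linPoly_hom φ1).mul (linPoly_hom φ1))
        have hq0 : q ≠ 0 := by
          intro h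
          have h1 := heval (E ![1, 0, 1])
          rw [h, LinearEquiv.symm_apply_apply] at h1
          simp at h1
        refine ⟨q, hq0, hq2, fun x hx => ?_⟩
        have hxY := hZY hx
        rw [hY] at hxY
        rcases hxY with hxC | hxU
        · rw [hC] at hxC
          obtain ⟨s', t', c', hc', hceq⟩ := hxC
          have hA_eq : (A fun i : Fin 3 => s' ^ (2 - (i : ℕ)) * t' ^ (i : ℕ)) =
              E ![s' ^ 2, s' * t', t' ^ 2] := by
            show _ = A _
            congr 1
            funext i; fin_cases i <;> norm_num
          rw [hA_eq] at hceq
          have hsymm : c' • E.symm x.rep = ![s' ^ 2, s' * t', t' ^ 2] := by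
            rw [← map_smul, hceq, LinearEquiv.symm_apply_apply]
          have hsymm' : E.symm x.rep = c'⁻¹ • ![s' ^ 2, s' * t', t' ^ 2] := by
            rw [← hsymm, inv_smul_smul₀ hc']
          rw [heval, hsymm']
          simp only [Pi.smul_apply, smul_eq_mul, Matrix.cons_val_zero, Matrix.cons_val_one,
            Matrix.head_cons, Matrix.cons_val_two, Matrix.tail_cons]
          ring
        · obtain ⟨i, _⟩ := Set.mem_iUnion.mp hxU
          exact i.elim0
    · -- type (0;2): two lines through y
      have hnn1 : ∀ i, nn i = 1 := fun i => le_antisymm (hnn i).2 (hnn i).1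
      have hsum' : (∑ i, nn i) = s := by simp [hnn1]
      rw [hsum'] at hsum
      subst hsum
      have hW0 : Module.finrank k (W 0) = 2 := by rw [hWr 0, hnn1 0]
      have hW1 : Module.finrank k (W 1) = 2 := by rw [hWr 1, hnn1 1]
      obtain ⟨q, hq0, hq2, hqv⟩ := quad_of_two_planes (W 0) (W 1) hW0 hW1
      refine ⟨q, hq0, hq2, fun x hx => ?_⟩
      have hxY := hZY hx
      rw [hY] at hxY
      obtain ⟨i, hxi⟩ := Set.mem_iUnion.mp hxY
      apply hqv
      fin_cases i
      · left; exact hxi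
      · right; exact hxi
  · rintro ⟨q, hq0, hq2, hqz⟩
    have hQ : ∀ v : Fin 3 → k, eval v q =
        Qf (coeff (Finsupp.single 0 2) q)
          (coeff (Finsupp.single 0 1 + Finsupp.single 1 1) q)
          (coeff (Finsupp.single 0 1 + Finsupp.single 2 1) q)
          (coeff (Finsupp.single 1 2) q)
          (coeff (Finsupp.single 1 1 + Finsupp.single 2 1) q)
          (coeff (Finsupp.single 2 2) q) v := fun v => expand2 q hq2 v
    set a := coeff (Finsupp.single 0 2) q
    set b := coeff (Finsupp.single 0 1 + Finsupp.single 1 1) q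
    set c := coeff (Finsupp.single 0 1 + Finsupp.single 2 1) q
    set d := coeff (Finsupp.single 1 2) q
    set e := coeff (Finsupp.single 1 1 + Finsupp.single 2 1) q
    set f := coeff (Finsupp.single 2 2) q
    have hQne : ∃ v : Fin 3 → k, Qf a b c d e f v ≠ 0 := by
      by_contra h
      push_neg at h
      apply hq0
      apply MvPolynomial.funext (q := 0)
      intro v
      rw [hQ v, h v]
      simp
    rcases classify a b c d e f with ⟨φ, ψ, hfact⟩ | ⟨A, hA⟩
    · -- product of two linear forms
      have hφ : φ ≠ 0 := by
        rintro rfl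
        obtain ⟨v, hv⟩ := hQne
        apply hv
        rw [hfact]
        simp
      have hψ : ψ ≠ 0 := by
        rintro rfl
        obtain ⟨v, hv⟩ := hQne
        apply hv
        rw [hfact]
        simp
      have hK1 : Module.finrank k (LinearMap.ker φ) = 2 := dual_ker_rank φ hφ
      have hK2 : Module.finrank k (LinearMap.ker ψ) = 2 := dual_ker_rank ψ hψ
      have hZK : ∀ x ∈ Z, x.rep ∈ LinearMap.ker φ ∨ x.rep ∈ LinearMap.ker ψ := by
        intro x hx
        have h0 : Qf a b c d e f x.rep = 0 := by rw [← hQ]; exact hqz x hx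
        rw [hfact] at h0
        rcases mul_eq_zero.mp h0 with h | h
        · left; exact LinearMap.mem_ker.mpr h
        · right; exact LinearMap.mem_ker.mpr h
      by_cases hKK : LinearMap.ker φ = LinearMap.ker ψ
      · exfalso
        apply hline
        refine ⟨LinearMap.ker φ, hK1, fun x hx => ?_⟩
        rcases hZK x hx with h | h
        · exact h
        · show x.rep ∈ LinearMap.ker φ
          rw [hKK]; exact h
      · refine ⟨1, 1, projSet k (LinearMap.ker φ) ∪ projSet k (LinearMap.ker ψ), ?_,
          Or.inl ⟨projSet k (LinearMap.ker φ), ?_⟩⟩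
        · intro x hx
          rcases hZK x hx with h | h
          · exact Or.inl h
          · exact Or.inr h
        · obtain ⟨p, hpU, hpeq⟩ := projSet_singleton (LinearMap.ker φ ⊓ LinearMap.ker ψ)
            (planes_meet _ _ hK1 hK2 hKK)
          refine ⟨le_refl 1, fun _ => 1, LinearMap.ker φ, fun _ => LinearMap.ker ψ,
            fun i => ⟨le_refl 1, by norm_num⟩, by simp,
            isRNC_line (LinearMap.ker φ) hK1, fun i => by rw [hK2],
            fun i => ⟨p, ?_, ?_⟩, fun i j hij => absurd (Subsingleton.elim i j) hij, ?_⟩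
          · exact hpU.1
          · ext x
            constructor
            · intro hx
              have : x.rep ∈ LinearMap.ker φ ⊓ LinearMap.ker ψ := ⟨hx.1, hx.2⟩
              rw [← hpeq]
              exact this
            · rintro rfl
              exact ⟨hpU.1, hpU.2⟩
          · rw [Set.iUnion_const]
    · -- smooth conic
      set CC : Set (Projectivization k (Fin (2 + 1) → k)) :=
        {x : Projectivization k (Fin (2 + 1) → k) | ∃ s t c' : k, c' ≠ 0 ∧
          c' • x.rep = A.toLinearMap fun i => s ^ (2 - (i : ℕ)) * t ^ (i : ℕ)} with hCC
      refine ⟨2, 0, CC, ?_, Or.inl ⟨CC, ?_⟩⟩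
      · intro x hx
        have h0 : Qf a b c d e f x.rep = 0 := by rw [← hQ]; exact hqz x hx
        obtain ⟨s, t, c', hc', hceq⟩ := conic_param a b c d e f A hA x.rep x.rep_nonzero h0
        refine ⟨s, t, c', hc', ?_⟩
        have hfun : (fun i : Fin 3 => s ^ (2 - (i : ℕ)) * t ^ (i : ℕ)) =
            ![s ^ 2, s * t, t ^ 2] := by
          funext i; fin_cases i <;> norm_num
        rw [hfun]
        exact hceq
      · refine ⟨by norm_num, Fin.elim0, LinearMap.range A.toLinearMap, Fin.elim0,
          fun i => i.elim0, by simp, ⟨A.toLinearMap, A.injective, rfl, rfl⟩,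
          fun i => i.elim0, fun i => i.elim0, fun i j _ => i.elim0, by simp⟩
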